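/- Let J, J', J'' be index sets, H a column-finite J'×J-graded Hilbert space and H' a column-finite J''×J'-graded Hilbert space. Define functors F^H : Hf^J → Hf^{J'} on finite-dimensional J-graded Hilbert spaces by (F^H K)_p = ⊕_{r} H_{pr} ⊗ K_r and (F^H T)_p = ⊕_r id ⊗ T_r on morphisms. Then the composite F^{H'} ∘ F^H is naturally unitarily isomorphic to F^{H'' } where H''_{v r} = ⊕_{p∈J'} H'_{v p} ⊗ H_{p r} (the ℓ∞(J')-balanced tensor product), via the canonical associativity isomorphisms ⊕_p H'_{vp} ⊗ (⊕_r H_{pr} ⊗ K_r) ≅ ⊕_r (⊕_p H'_{vp} ⊗ H_{pr}) ⊗ K_r. -/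

import Mathlib

open scoped TensorProduct DirectSum

noncomputable section

variable {J J' : Type*} [DecidableEq J] [DecidableEq J']

/-- The index swap `(Σ _ : J', J) ≃ (Σ _ : J, J')`. -/
def swapSigma (J' J : Type*) : (Σ _ : J', J) ≃ (Σ _ : J, J') :=
  (Equiv.sigmaEquivProd J' J).trans
    ((Equiv.prodComm J' J).trans (Equiv.sigmaEquivProd J J').symm)

/-- The canonical associativity/distributivity isomorphism
`⊕_p H'_{vp} ⊗ (⊕_r H_{pr} ⊗ K_r) ≅ ⊕_r (⊕_p H'_{vp} ⊗ H_{pr}) ⊗ K_r`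
identifying `(F^{H'} ∘ F^H)(K)_v` with `F^{H' ⊗_{ℓ∞(J')} H}(K)_v`. -/
def composeIso (H' : J' → Type*) (H : J' → J → Type*) (K : J → Type*)
    [∀ p, AddCommGroup (H' p)] [∀ p, Module ℂ (H' p)]
    [∀ p r, AddCommGroup (H p r)] [∀ p r, Module ℂ (H p r)]
    [∀ r, AddCommGroup (K r)] [∀ r, Module ℂ (K r)] :
    (⨁ p, H' p ⊗[ℂ] (⨁ r, H p r ⊗[ℂ] K r)) ≃ₗ[ℂ]
      ⨁ r, (⨁ p, H' p ⊗[ℂ] H p r) ⊗[ℂ] K r :=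
  (DFinsupp.mapRange.linearEquiv fun p =>
      TensorProduct.directSumRight ℂ ℂ (H' p) fun r => H p r ⊗[ℂ] K r) ≪≫ₗ
    (DirectSum.sigmaLcurryEquiv ℂ
      (δ := fun (p : J') (r : J) => H' p ⊗[ℂ] (H p r ⊗[ℂ] K r))).symm ≪≫ₗ
    DirectSum.lequivCongrLeft ℂ (swapSigma J' J) ≪≫ₗ
    DirectSum.sigmaLcurryEquiv ℂ
      (δ := fun (r : J) (p : J') => H' p ⊗[ℂ] (H p r ⊗[ℂ] K r)) ≪≫ₗ
    DFinsupp.mapRange.linearEquiv fun r =>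
      (DFinsupp.mapRange.linearEquiv fun p =>
          (TensorProduct.assoc ℂ (H' p) (H p r) (K r)).symm) ≪≫ₗ
        (TensorProduct.directSumLeft ℂ ℂ (fun p => H' p ⊗[ℂ] H p r) (K r)).symm


lemma swap_lof {J J' : Type*} [DecidableEq J] [DecidableEq J']
    (M : (Σ _ : J', J) → Type*) [∀ i, AddCommMonoid (M i)] [∀ i, Module ℂ (M i)]
    (p : J') (r : J) (y : M ⟨p, r⟩) :
    DirectSum.lequivCongrLeft ℂ (swapSigma J' J) (DirectSum.lof ℂ _ M ⟨p, r⟩ y) =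
      DirectSum.lof ℂ _ (fun i : Σ _ : J, J' => M ⟨i.2, i.1⟩) ⟨r, p⟩ y := by
  refine DFinsupp.ext fun i => ?_
  obtain ⟨r', p'⟩ := i
  rw [DirectSum.lequivCongrLeft_apply]
  show (DirectSum.lof ℂ _ M ⟨p, r⟩ y) ⟨p', r'⟩ = _
  show (DFinsupp.single (⟨p, r⟩ : Σ _ : J', J) y) ⟨p', r'⟩ =
    (DFinsupp.single (β := fun i : Σ _ : J, J' => M ⟨i.2, i.1⟩) (⟨r, p⟩ : Σ _ : J, J') y) ⟨r', p'⟩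
  simp only [DFinsupp.single_apply]
  by_cases hp : p = p' <;> by_cases hr : r = r' <;>
    first
      | (subst hp; subst hr; simp)
      | (rw [dif_neg (by simp_all), dif_neg (by simp_all)])

lemma sigmaLcurryEquiv_symm_lof {J J' : Type*} [DecidableEq J] [DecidableEq J']
    (δ : J' → J → Type*) [∀ p r, AddCommMonoid (δ p r)] [∀ p r, Module ℂ (δ p r)]
    (p : J') (r : J) (y : δ p r) :
    (DirectSum.sigmaLcurryEquiv ℂ (δ := δ)).symm
        (DirectSum.lof ℂ J' (fun p => ⨁ r, δ p r) p (DirectSum.lof ℂ J (δ p) r y)) =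
      DirectSum.lof ℂ _ (fun i : Σ _ : J', J => δ i.1 i.2) ⟨p, r⟩ y := by
  exact DFinsupp.sigmaUncurry_single (δ := δ) p r y

lemma sigmaLcurryEquiv_lof {J J' : Type*} [DecidableEq J] [DecidableEq J']
    (δ : J' → J → Type*) [∀ p r, AddCommMonoid (δ p r)] [∀ p r, Module ℂ (δ p r)]
    (p : J') (r : J) (y : δ p r) :
    DirectSum.sigmaLcurryEquiv ℂ (δ := δ)
        (DirectSum.lof ℂ _ (fun i : Σ _ : J', J => δ i.1 i.2) ⟨p, r⟩ y) =
      DirectSum.lof ℂ J' (fun p => ⨁ r, δ p r) p (DirectSum.lof ℂ J (δ p) r y) := by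
  exact DFinsupp.sigmaCurry_single (δ := δ) ⟨p, r⟩ y

lemma mapRange_linearEquiv_lof {J : Type*} [DecidableEq J]
    (M N : J → Type*) [∀ i, AddCommMonoid (M i)] [∀ i, Module ℂ (M i)]
    [∀ i, AddCommMonoid (N i)] [∀ i, Module ℂ (N i)]
    (e : ∀ i, M i ≃ₗ[ℂ] N i) (i : J) (x : M i) :
    DFinsupp.mapRange.linearEquiv e (DirectSum.lof ℂ J M i x) =
      DirectSum.lof ℂ J N i (e i x) := by
  exact DFinsupp.mapRange_single (hf := fun i => (e i).map_zero)

lemma mapRange_linearMap_lof {J : Type*} [DecidableEq J]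
    (M N : J → Type*) [∀ i, AddCommMonoid (M i)] [∀ i, Module ℂ (M i)]
    [∀ i, AddCommMonoid (N i)] [∀ i, Module ℂ (N i)]
    (f : ∀ i, M i →ₗ[ℂ] N i) (i : J) (x : M i) :
    DFinsupp.mapRange.linearMap f (DirectSum.lof ℂ J M i x) =
      DirectSum.lof ℂ J N i (f i x) := by
  exact DFinsupp.mapRange_single (hf := fun i => (f i).map_zero)

set_option maxHeartbeats 2000000 in
lemma composeIso_lof {J J' : Type*} [DecidableEq J] [DecidableEq J']
    (H' : J' → Type*) (H : J' → J → Type*) (K : J → Type*)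
    [∀ p, AddCommGroup (H' p)] [∀ p, Module ℂ (H' p)]
    [∀ p r, AddCommGroup (H p r)] [∀ p r, Module ℂ (H p r)]
    [∀ r, AddCommGroup (K r)] [∀ r, Module ℂ (K r)]
    (p : J') (r : J) (x : H' p) (h : H p r) (k : K r) :
    composeIso H' H K (DirectSum.lof ℂ J' (fun p => H' p ⊗[ℂ] ⨁ r, H p r ⊗[ℂ] K r) p
        (x ⊗ₜ[ℂ] DirectSum.lof ℂ J (fun r => H p r ⊗[ℂ] K r) r (h ⊗ₜ[ℂ] k))) =
      DirectSum.lof ℂ J (fun r => (⨁ p, H' p ⊗[ℂ] H p r) ⊗[ℂ] K r) r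
        ((DirectSum.lof ℂ J' (fun p => H' p ⊗[ℂ] H p r) p (x ⊗ₜ[ℂ] h)) ⊗ₜ[ℂ] k) := by
  rw [composeIso]
  simp only [LinearEquiv.trans_apply]
  show (DFinsupp.mapRange.linearEquiv fun r =>
        (DFinsupp.mapRange.linearEquiv fun p => (TensorProduct.assoc ℂ (H' p) (H p r) (K r)).symm) ≪≫ₗ
          (TensorProduct.directSumLeft ℂ ℂ (fun p => H' p ⊗[ℂ] H p r) (K r)).symm)
      ((DirectSum.sigmaLcurryEquiv ℂ (δ := fun (r : J) (p : J') => H' p ⊗[ℂ] (H p r ⊗[ℂ] K r)))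
        ((DirectSum.lequivCongrLeft ℂ (swapSigma J' J))
          ((DirectSum.sigmaLcurryEquiv ℂ (δ := fun (p : J') (r : J) => H' p ⊗[ℂ] (H p r ⊗[ℂ] K r))).symm
            ((DFinsupp.mapRange.linearEquiv fun p => TensorProduct.directSumRight ℂ ℂ (H' p) fun r => H p r ⊗[ℂ] K r)
              ((DirectSum.lof ℂ J' (fun p => H' p ⊗[ℂ] ⨁ (r : J), H p r ⊗[ℂ] K r) p)
                (x ⊗ₜ[ℂ] (DirectSum.lof ℂ J (fun r => H p r ⊗[ℂ] K r) r) (h ⊗ₜ[ℂ] k))))))) =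
    (DirectSum.lof ℂ J (fun r => (⨁ (p : J'), H' p ⊗[ℂ] H p r) ⊗[ℂ] K r) r)
      ((DirectSum.lof ℂ J' (fun p => H' p ⊗[ℂ] H p r) p) (x ⊗ₜ[ℂ] h) ⊗ₜ[ℂ] k)
  have h1 := mapRange_linearEquiv_lof (J := J')
    (fun p => H' p ⊗[ℂ] ⨁ r : J, H p r ⊗[ℂ] K r)
    (fun p => ⨁ r : J, H' p ⊗[ℂ] (H p r ⊗[ℂ] K r))
    (fun p => TensorProduct.directSumRight ℂ ℂ (H' p) fun r => H p r ⊗[ℂ] K r) p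
    (x ⊗ₜ[ℂ] DirectSum.lof ℂ J (fun r => H p r ⊗[ℂ] K r) r (h ⊗ₜ[ℂ] k))
  rw [h1, TensorProduct.directSumRight_tmul_lof]
  rw [sigmaLcurryEquiv_symm_lof (fun p r => H' p ⊗[ℂ] (H p r ⊗[ℂ] K r)) p r
    (x ⊗ₜ[ℂ] (h ⊗ₜ[ℂ] k))]
  rw [swap_lof (fun i : Σ _ : J', J => H' i.1 ⊗[ℂ] (H i.1 i.2 ⊗[ℂ] K i.2)) p r
    (x ⊗ₜ[ℂ] (h ⊗ₜ[ℂ] k))]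
  rw [sigmaLcurryEquiv_lof (fun r p => H' p ⊗[ℂ] (H p r ⊗[ℂ] K r)) r p
    (x ⊗ₜ[ℂ] (h ⊗ₜ[ℂ] k))]
  have h5 := mapRange_linearEquiv_lof (J := J)
    (fun r => ⨁ p : J', H' p ⊗[ℂ] (H p r ⊗[ℂ] K r))
    (fun r => (⨁ p : J', H' p ⊗[ℂ] H p r) ⊗[ℂ] K r)
    (fun r => (DFinsupp.mapRange.linearEquiv fun p =>
        (TensorProduct.assoc ℂ (H' p) (H p r) (K r)).symm) ≪≫ₗ
      (TensorProduct.directSumLeft ℂ ℂ (fun p => H' p ⊗[ℂ] H p r) (K r)).symm) r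
    (DirectSum.lof ℂ J' (fun p => H' p ⊗[ℂ] (H p r ⊗[ℂ] K r)) p (x ⊗ₜ[ℂ] (h ⊗ₜ[ℂ] k)))
  refine h5.trans ?_
  refine congrArg _ ?_
  simp only [LinearEquiv.trans_apply]
  have h6 := mapRange_linearEquiv_lof (J := J')
    (fun p => H' p ⊗[ℂ] (H p r ⊗[ℂ] K r))
    (fun p => (H' p ⊗[ℂ] H p r) ⊗[ℂ] K r)
    (fun p => (TensorProduct.assoc ℂ (H' p) (H p r) (K r)).symm) p
    (x ⊗ₜ[ℂ] (h ⊗ₜ[ℂ] k))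
  refine (congrArg _ h6).trans ?_
  rw [TensorProduct.assoc_symm_tmul]
  exact TensorProduct.directSumLeft_symm_lof_tmul ℂ ℂ (M₁ := fun p => H' p ⊗[ℂ] H p r) (M₂' := K r) p (x ⊗ₜ[ℂ] h) k

set_option maxHeartbeats 2000000 in
/-- Composition of the functors induced by column-finite bi-graded Hilbert spaces:
for column-finite `H'` (`J''×J'`-graded) and `H` (`J'×J`-graded), the composite
`F^{H'} ∘ F^H` is naturally isomorphic to `F^{H''}` where
`H''_{vr} = ⊕_p H'_{vp} ⊗ H_{pr}`, via the canonical associativity isomorphisms;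
i.e. `composeIso` (at each `v`) is natural in the graded space `K`. -/
theorem stmt_13 {J J' J'' : Type*} [DecidableEq J] [DecidableEq J']
    (v : J'')
    (H' : J' → Type*) (H : J' → J → Type*) (K K' : J → Type*)
    [∀ p, NormedAddCommGroup (H' p)] [∀ p, InnerProductSpace ℂ (H' p)]
    [∀ p r, NormedAddCommGroup (H p r)] [∀ p r, InnerProductSpace ℂ (H p r)]
    [∀ r, NormedAddCommGroup (K r)] [∀ r, InnerProductSpace ℂ (K r)]
    [∀ r, NormedAddCommGroup (K' r)] [∀ r, InnerProductSpace ℂ (K' r)]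
    -- column-finiteness / finite-dimensionality hypotheses:
    [∀ p, FiniteDimensional ℂ (H' p)] [∀ p r, FiniteDimensional ℂ (H p r)]
    [∀ r, FiniteDimensional ℂ (K r)] [∀ r, FiniteDimensional ℂ (K' r)]
    (hcfH : ∀ r : J, {p : J' | ∃ x : H p r, x ≠ 0}.Finite)
    (hcfH' : {p : J' | ∃ x : H' p, x ≠ 0}.Finite)
    (hK : {r : J | ∃ x : K r, x ≠ 0}.Finite) (hK' : {r : J | ∃ x : K' r, x ≠ 0}.Finite)
    -- a morphism of graded Hilbert spaces `T : K → K'`: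
    (T : ∀ r, K r →ₗ[ℂ] K' r) :
    -- naturality of the canonical isomorphism in `K`:
    (composeIso H' H K').toLinearMap.comp
        (DFinsupp.mapRange.linearMap fun p =>
          LinearMap.lTensor (H' p)
            (DFinsupp.mapRange.linearMap fun r => LinearMap.lTensor (H p r) (T r))) =
      (DFinsupp.mapRange.linearMap fun r =>
          LinearMap.lTensor (⨁ p, H' p ⊗[ℂ] H p r) (T r)).comp
        (composeIso H' H K).toLinearMap := by
  refine DirectSum.linearMap_ext ℂ fun p => TensorProduct.ext ?_
  refine LinearMap.ext fun x => ?_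
  refine DirectSum.linearMap_ext ℂ fun r => TensorProduct.ext ?_
  refine LinearMap.ext fun h => ?_
  refine LinearMap.ext fun k => ?_
  simp only [LinearMap.compr₂ₛₗ_apply, TensorProduct.mk_apply, LinearMap.comp_apply]
  have e1 := mapRange_linearMap_lof (J := J')
    (fun p => H' p ⊗[ℂ] ⨁ r : J, H p r ⊗[ℂ] K r)
    (fun p => H' p ⊗[ℂ] ⨁ r : J, H p r ⊗[ℂ] K' r)
    (fun p => LinearMap.lTensor (H' p)
      (DFinsupp.mapRange.linearMap fun r => LinearMap.lTensor (H p r) (T r))) p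
    (x ⊗ₜ[ℂ] DirectSum.lof ℂ J (fun r => H p r ⊗[ℂ] K r) r (h ⊗ₜ[ℂ] k))
  have e2 := mapRange_linearMap_lof (J := J)
    (fun r => H p r ⊗[ℂ] K r) (fun r => H p r ⊗[ℂ] K' r)
    (fun r => LinearMap.lTensor (H p r) (T r)) r (h ⊗ₜ[ℂ] k)
  rw [LinearMap.lTensor_tmul] at e1
  refine (congrArg (fun z => composeIso H' H K' z) e1).trans ?_
  refine (congrArg (fun z => composeIso H' H K'
      (DirectSum.lof ℂ J' (fun p => H' p ⊗[ℂ] ⨁ r : J, H p r ⊗[ℂ] K' r) p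
        (x ⊗ₜ[ℂ] z))) e2).trans ?_
  refine (composeIso_lof H' H K' p r x h (T r k)).trans ?_
  refine Eq.symm ?_
  refine (congrArg (fun z => (DFinsupp.mapRange.linearMap fun r =>
      LinearMap.lTensor (⨁ p : J', H' p ⊗[ℂ] H p r) (T r)) z)
    (composeIso_lof H' H K p r x h k)).trans ?_
  have e3 := mapRange_linearMap_lof (J := J)
    (fun r => (⨁ p : J', H' p ⊗[ℂ] H p r) ⊗[ℂ] K r)
    (fun r => (⨁ p : J', H' p ⊗[ℂ] H p r) ⊗[ℂ] K' r)
    (fun r => LinearMap.lTensor (⨁ p : J', H' p ⊗[ℂ] H p r) (T r)) r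
    (DirectSum.lof ℂ J' (fun p => H' p ⊗[ℂ] H p r) p (x ⊗ₜ[ℂ] h) ⊗ₜ[ℂ] k)
  rw [LinearMap.lTensor_tmul] at e3
  exact e3

end
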